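/- Let x = [x₁; x₂] with x₁ ∈ ℂⁿ, x₂ ∈ ℂ^m \ {0}, y, z ∈ ℂⁿ, and w = [w₁; w₂] with w₁ ∈ ℂⁿ \ {0}, w₂ ∈ ℂ^m \ {0}. There exist Δ₁ ∈ ℂ^{n,n} positive semidefinite and Δ₂ ∈ ℂ^{n,m} such that Δ := [Δ₁ Δ₂] satisfies Δx = y and Δ*z = w, if and only if x*w = y*z and z*w₁ > 0. -/

import Mathlib

open Matrix
open scoped ComplexOrder

private lemma vmv_mulVec {k l : ℕ} (u : Fin k → ℂ) (v x : Fin l → ℂ) :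
    (vecMulVec u v) *ᵥ x = (v ⬝ᵥ x) • u := by
  funext i
  simp only [mulVec, dotProduct, vecMulVec_apply, Pi.smul_apply, smul_eq_mul, Finset.sum_mul]
  exact Finset.sum_congr rfl fun j _ => by ring

private lemma smul_vmv_conjT {k l : ℕ} (a : ℂ) (u : Fin k → ℂ) (v : Fin l → ℂ) :
    (a • vecMulVec u v)ᴴ = star a • vecMulVec (star v) (star u) := by
  ext i j
  simp only [conjTranspose_apply, vecMulVec_apply, Matrix.smul_apply, smul_eq_mul, star_mul',
    Pi.star_apply]
  ring

private lemma dot_star_comm {k : ℕ} (a b : Fin k → ℂ) : star (star a ⬝ᵥ b) = star b ⬝ᵥ a := by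
  simp [dotProduct, mul_comm]

/-- Doubly structured positive semidefinite mapping problem: existence of `Δ = [Δ₁ Δ₂]`
with `Δ₁ ⪰ 0`, `Δx = y`, `Δ*z = w` iff `x*w = y*z` and `z*w₁ > 0`. -/
theorem dspsdm_exists {n m : ℕ} (x₁ : Fin n → ℂ) (x₂ : Fin m → ℂ) (y z : Fin n → ℂ)
    (w₁ : Fin n → ℂ) (w₂ : Fin m → ℂ)
    (hx₂ : x₂ ≠ 0) (hw₁ : w₁ ≠ 0) (hw₂ : w₂ ≠ 0) :
    (∃ (Δ₁ : Matrix (Fin n) (Fin n) ℂ) (Δ₂ : Matrix (Fin n) (Fin m) ℂ),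
      Δ₁.PosSemidef ∧ Δ₁.mulVec x₁ + Δ₂.mulVec x₂ = y ∧
      Δ₁ᴴ.mulVec z = w₁ ∧ Δ₂ᴴ.mulVec z = w₂) ↔
    (star x₁ ⬝ᵥ w₁ + star x₂ ⬝ᵥ w₂ = star y ⬝ᵥ z ∧
      (star z ⬝ᵥ w₁).im = 0 ∧ 0 < (star z ⬝ᵥ w₁).re) := by
  constructor
  · rintro ⟨Δ₁, Δ₂, hpsd, h2, h3, h4⟩
    have hH : Δ₁ᴴ = Δ₁ := hpsd.1
    have e1 : star x₁ ⬝ᵥ w₁ = star (Δ₁ *ᵥ x₁) ⬝ᵥ z := by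
      rw [← h3, star_mulVec, dotProduct_mulVec]
    have e2 : star x₂ ⬝ᵥ w₂ = star (Δ₂ *ᵥ x₂) ⬝ᵥ z := by
      rw [← h4, star_mulVec, dotProduct_mulVec]
    have hβ : star z ⬝ᵥ w₁ = star z ⬝ᵥ Δ₁ *ᵥ z := by rw [← h3, hH]
    have hnonneg : 0 ≤ star z ⬝ᵥ Δ₁ *ᵥ z := hpsd.dotProduct_mulVec_nonneg z
    have hle := hnonneg
    rw [Complex.le_def] at hle
    have hne : star z ⬝ᵥ Δ₁ *ᵥ z ≠ 0 := by
      intro h0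
      have hz0 : Δ₁ *ᵥ z = 0 := (hpsd.dotProduct_mulVec_zero_iff z).mp h0
      exact hw₁ (by rw [← h3, hH, hz0])
    refine ⟨?_, ?_, ?_⟩
    · rw [e1, e2, ← add_dotProduct, ← star_add, h2]
    · rw [hβ]; exact hle.2.symm
    · rw [hβ]
      rcases lt_or_eq_of_le hle.1 with h | h
      · simpa using h
      · exact absurd (Complex.ext h.symm hle.2.symm) hne
  · rintro ⟨h1, him, hre⟩
    set β : ℂ := star z ⬝ᵥ w₁ with hβdef
    have hβ0 : β ≠ 0 := by
      intro h; rw [h] at hre; simp at hre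
    have hβstar : star β = β := Complex.conj_eq_iff_im.mpr him
    have hwz : star w₁ ⬝ᵥ z = β := by
      rw [← hβstar]; exact (dot_star_comm z w₁).symm
    set Δ₁ : Matrix (Fin n) (Fin n) ℂ := β⁻¹ • vecMulVec w₁ (star w₁) with hΔ₁def
    have hΔ₁H : Δ₁ᴴ = Δ₁ := by
      rw [hΔ₁def, smul_vmv_conjT, star_star, star_inv₀, hβstar]
    have hΔ₁z : Δ₁ *ᵥ z = w₁ := by
      rw [hΔ₁def, smul_mulVec, vmv_mulVec, hwz, smul_smul,
        inv_mul_cancel₀ hβ0, one_smul]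
    have hz0 : z ≠ 0 := by
      intro h; rw [hβdef, h] at hre; simp at hre
    -- positive semidefiniteness of Δ₁
    have hpsd : Δ₁.PosSemidef := by
      refine .of_dotProduct_mulVec_nonneg hΔ₁H fun v => ?_
      have : star v ⬝ᵥ Δ₁ *ᵥ v = β⁻¹ * (star (star v ⬝ᵥ w₁) * (star v ⬝ᵥ w₁)) := by
        rw [hΔ₁def, smul_mulVec, vmv_mulVec, dotProduct_smul, dotProduct_smul,
          smul_eq_mul, smul_eq_mul, dot_star_comm v w₁]
      rw [this]
      have hβre : β = (β.re : ℂ) := Complex.ext rfl (by simp [him])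
      rw [hβre, ← Complex.ofReal_inv, Complex.star_def, Complex.conj_mul']
      have hcast : ((β.re⁻¹ : ℝ) : ℂ) * (‖star v ⬝ᵥ w₁‖ : ℂ) ^ 2
          = ((β.re⁻¹ * ‖star v ⬝ᵥ w₁‖ ^ 2 : ℝ) : ℂ) := by push_cast; ring
      rw [hcast, Complex.zero_le_real]
      positivity
    -- the second block
    set u : Fin n → ℂ := y - Δ₁ *ᵥ x₁ with hudef
    have huz : star u ⬝ᵥ z = star x₂ ⬝ᵥ w₂ := by
      have : star (Δ₁ *ᵥ x₁) ⬝ᵥ z = star x₁ ⬝ᵥ w₁ := by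
        rw [star_mulVec, ← dotProduct_mulVec, hΔ₁H, hΔ₁z]
      rw [hudef, star_sub, sub_dotProduct, this]
      linear_combination -h1
    set α : ℂ := star x₂ ⬝ᵥ x₂ with hαdef
    have hαstar : star α = α := dot_star_comm x₂ x₂
    have hα0 : α ≠ 0 := fun h => hx₂ (dotProduct_star_self_eq_zero.mp h)
    set γ : ℂ := star z ⬝ᵥ z with hγdef
    have hγstar : star γ = γ := dot_star_comm z z
    have hγ0 : γ ≠ 0 := fun h => hz0 (dotProduct_star_self_eq_zero.mp h)
    set c : Fin m → ℂ := w₂ - (α⁻¹ * (star u ⬝ᵥ z)) • x₂ with hcdef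
    set Δ₂ : Matrix (Fin n) (Fin m) ℂ :=
      α⁻¹ • vecMulVec u (star x₂) + γ⁻¹ • vecMulVec z (star c) with hΔ₂def
    have hΔ₂H : Δ₂ᴴ = α⁻¹ • vecMulVec x₂ (star u) + γ⁻¹ • vecMulVec c (star z) := by
      rw [hΔ₂def, conjTranspose_add, smul_vmv_conjT, smul_vmv_conjT, star_star, star_star,
        star_inv₀, star_inv₀, hαstar, hγstar]
    have hΔ₂z : Δ₂ᴴ *ᵥ z = w₂ := by
      rw [hΔ₂H, add_mulVec, smul_mulVec, smul_mulVec, vmv_mulVec, vmv_mulVec,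
        ← hγdef, smul_smul, smul_smul, inv_mul_cancel₀ hγ0, one_smul, hcdef]
      abel
    have hcx : star c ⬝ᵥ x₂ = 0 := by
      rw [hcdef, star_sub, sub_dotProduct, star_smul, smul_dotProduct, ← hαdef,
        star_mul', star_inv₀, hαstar, smul_eq_mul, huz]
      have h2 : star w₂ ⬝ᵥ x₂ = star (star x₂ ⬝ᵥ w₂) := (dot_star_comm x₂ w₂).symm
      rw [h2]
      field_simp
      ring
    have hΔ₂x : Δ₂ *ᵥ x₂ = u := by
      rw [hΔ₂def, add_mulVec, smul_mulVec, smul_mulVec, vmv_mulVec, vmv_mulVec,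
        hcx, ← hαdef, smul_smul, inv_mul_cancel₀ hα0, one_smul, zero_smul, smul_zero, add_zero]
    exact ⟨Δ₁, Δ₂, hpsd, by rw [hΔ₂x, hudef]; abel, by rw [hΔ₁H]; exact hΔ₁z, hΔ₂z⟩
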